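/- Let (G,τ) be a tree instance of RFTT in which every turnover time τ(j) is a power of 2. Then the min-avg value of the instance equals 2 Σ_{e ∈ E} c(e)/q(e). Moreover, this value is attained by the periodic schedule J(k) = { j ∈ V : τ(j) divides k }. -/

import Mathlib

open scoped BigOperators

/-- The unique path between `u` and `v` in a tree, as a walk. -/
noncomputable def treePath {α : Type*} {G : SimpleGraph α} (hG : G.IsTree) (u v : α) :
    G.Walk u v :=
  (hG.existsUnique_path u v).exists.choose

/-- The weighted shortest-path (tree) metric: the total weight of the unique path. -/
noncomputable def treeDist {α : Type*} {G : SimpleGraph α} (hG : G.IsTree)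
    (w : Sym2 α → ℝ) (u v : α) : ℝ :=
  ((treePath hG u v).edges.map w).sum

/-- The cost of the route `s, v₁, …, v_r, s` where `l = [v₁, …, v_r]`. -/
def routeLen {X : Type*} (d : X → X → ℝ) (s : X) (l : List X) : ℝ :=
  (List.zip (s :: l) (l ++ [s])).foldr (fun p acc => d p.1 p.2 + acc) 0

/-- The tour cost of a finite set `S`: the minimum over all orderings `v₁,…,v_r` of the
elements of `S` of `d s v₁ + ∑ d vᵢ vᵢ₊₁ + d v_r s`, with `c ∅ = 0`. -/
noncomputable def tourCost {X : Type*} [DecidableEq X] (d : X → X → ℝ) (s : X)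
    (S : Finset X) : ℝ :=
  if S = ∅ then 0
  else sInf {x : ℝ | ∃ l : List X, l.Nodup ∧ l.toFinset = S ∧ x = routeLen d s l}

/-- Feasibility for a rooted tree instance with depot `s`: every vertex `v ≠ s`
(i.e. every client) is visited in every window of `τ v` consecutive days. -/
def FeasibleTree {α : Type*} (s : α) (τ : α → ℕ) (J : ℕ → Finset α) : Prop :=
  ∀ v : α, v ≠ s → ∀ t : ℕ, ∃ k : ℕ, t < k ∧ k ≤ t + τ v ∧ v ∈ J k

/-- The tt-weight `q(e) = min_{j ∈ D(e)} τ j` of an edge `e` of the tree rooted at the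
depot `s`, where `D(e)` is the set of clients `j` lying below `e`, i.e. those `j ≠ s`
such that `e` lies on the path from `s` to `j`. -/
noncomputable def ttWeight {α : Type*} {G : SimpleGraph α} (hG : G.IsTree) (s : α)
    (τ : α → ℕ) (e : Sym2 α) : ℕ :=
  sInf {m : ℕ | ∃ j : α, j ≠ s ∧ e ∈ (treePath hG s j).edges ∧ m = τ j}

/-- The min-avg value of a tree instance: the infimum over feasible periodic schedules
of the average daily tour cost. -/
noncomputable def minAvgTree {α : Type*} [Fintype α] [DecidableEq α]
    {G : SimpleGraph α} (hG : G.IsTree) (w : Sym2 α → ℝ) (s : α) (τ : α → ℕ) : ℝ :=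
  sInf {x : ℝ | ∃ (J : ℕ → Finset α) (ℓ : ℕ), 1 ≤ ℓ ∧ (∀ k : ℕ, J (k + ℓ) = J k) ∧
    FeasibleTree s τ J ∧
    x = (∑ k ∈ Finset.Icc 1 ℓ, tourCost (treeDist hG w) s (J k)) / (ℓ : ℝ)}

namespace RFTT

/-! ### Counting sign changes in a boolean list -/

def chg : Bool → List Bool → ℕ
  | _, [] => 0
  | x, y :: ys => (if x = y then 0 else 1) + chg y ys

lemma chg_eq_zero {x : Bool} {L : List Bool} (h : ∀ b ∈ L, b = x) : chg x L = 0 := by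
  induction L with
  | nil => rfl
  | cons y ys ih =>
    have hy : y = x := h y (by simp)
    subst hy
    have h2 : chg y ys = 0 := ih fun b hb => h b (by simp [hb])
    simp [chg, h2]

lemma one_le_chg {x : Bool} {L : List Bool} (h : ∃ b ∈ L, b ≠ x) : 1 ≤ chg x L := by
  induction L generalizing x with
  | nil => simp at h
  | cons y ys ih =>
    by_cases hxy : x = y
    · subst hxy
      obtain ⟨b, hb, hbx⟩ := h
      rcases List.mem_cons.1 hb with rfl | hb
      · exact absurd rfl hbx
      · have h1 : 1 ≤ chg x ys := ih ⟨b, hb, hbx⟩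
        have : chg x (x :: ys) = chg x ys := by simp [chg]
        omega
    · have : chg x (y :: ys) = 1 + chg y ys := by simp [chg, if_neg hxy]
      omega

lemma two_le_chg {L : List Bool} (h : true ∈ L) : 2 ≤ chg false (L ++ [false]) := by
  induction L with
  | nil => simp at h
  | cons b bs ih =>
    cases b with
    | false =>
      have : true ∈ bs := by simpa using h
      simpa [chg] using ih this
    | true =>
      have h1 : 1 ≤ chg true (bs ++ [false]) :=
        one_le_chg ⟨false, by simp, by simp⟩
      have : chg false ((true :: bs) ++ [false]) = 1 + chg true (bs ++ [false]) := by
        simp [chg]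
      omega

lemma chg_le_one {β : Type*} (P : β → Bool) (l : List β)
    (h : l.Pairwise fun b c => P c = true → P b = true) :
    chg true (l.map P ++ [false]) ≤ 1 := by
  induction l with
  | nil => simp [chg]
  | cons a l' ih =>
    rw [List.pairwise_cons] at h
    obtain ⟨ha, h'⟩ := h
    cases hPa : P a with
    | true =>
      have : chg true ((a :: l').map P ++ [false]) = chg true (l'.map P ++ [false]) := by
        simp [chg, hPa]
      rw [this]
      exact ih h'
    | false =>
      have hall : ∀ b ∈ l', P b = false := by
        intro b hb
        by_contra hb'
        have : P b = true := by simpa using hb'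
        have := ha b hb this
        simp [hPa] at this
      have : chg false (l'.map P ++ [false]) = 0 := by
        apply chg_eq_zero
        intro b hb
        rcases List.mem_append.1 hb with hb | hb
        · obtain ⟨c, hc, rfl⟩ := List.mem_map.1 hb
          exact hall c hc
        · simpa using hb
      simp [chg, hPa, this]

lemma chg_le_two {β : Type*} (r : β → β → Prop) (P : β → Bool) (l : List β)
    (hs : l.Pairwise r)
    (hint : ∀ a b c, r a b → r b c → P a = true → P c = true → P b = true) :
    chg false (l.map P ++ [false]) ≤ 2 := by
  induction l with
  | nil => simp [chg]
  | cons a l' ih =>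
    rw [List.pairwise_cons] at hs
    obtain ⟨ha, hs'⟩ := hs
    cases hPa : P a with
    | false => simpa [chg, hPa] using ih hs'
    | true =>
      have h1 : chg true (l'.map P ++ [false]) ≤ 1 := by
        apply chg_le_one
        refine hs'.imp_of_mem ?_
        intro b c hb _hc hbc hPc
        exact hint a b c (ha b hb) hbc hPa hPc
      have : chg false ((a :: l').map P ++ [false]) = 1 + chg true (l'.map P ++ [false]) := by
        simp [chg, hPa]
      omega

/-! ### Tree path API -/

open SimpleGraph

variable {α : Type*} {G : SimpleGraph α} (hG : G.IsTree)

lemma treePath_isPath (u v : α) : (treePath hG u v).IsPath :=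
  (hG.existsUnique_path u v).exists.choose_spec

lemma treePath_eq {u v : α} {p : G.Walk u v} (hp : p.IsPath) : treePath hG u v = p := by
  obtain ⟨q, _hq, huniq⟩ := hG.existsUnique_path u v
  exact (huniq _ (treePath_isPath hG u v)).trans (huniq p hp).symm

lemma treePath_self (v : α) : treePath hG v v = Walk.nil :=
  treePath_eq hG (Walk.IsPath.nil)

variable [DecidableEq α] (s : α)

omit [DecidableEq α] in
lemma edges_treePath_self : (treePath hG s s).edges = [] := by
  rw [treePath_self]; rfl

/-- For an edge `{x,y}` of the tree, the path from `s` to one endpoint extends the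
path to the other endpoint by that edge. -/
lemma adj_step {x y : α} (h : G.Adj x y) :
    ((treePath hG s y).edges = (treePath hG s x).edges.concat s(x, y) ∧
      s(x, y) ∉ (treePath hG s x).edges) ∨
    ((treePath hG s x).edges = (treePath hG s y).edges.concat s(x, y) ∧
      s(x, y) ∉ (treePath hG s y).edges) := by
  set p := treePath hG s x with hp
  have hpath : p.IsPath := treePath_isPath hG s x
  by_cases hy : y ∈ p.support
  · right
    have htake : treePath hG s y = p.takeUntil y hy :=
      treePath_eq hG (hpath.takeUntil hy)
    have hdrop : p.dropUntil y hy = Walk.cons h.symm Walk.nil := by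
      have h1 : (p.dropUntil y hy).IsPath := hpath.dropUntil hy
      have h2 : (Walk.cons h.symm Walk.nil : G.Walk y x).IsPath := by
        simp [Walk.isPath_def, Walk.support_cons, h.ne']
      obtain ⟨q, _hq, huniq⟩ := hG.existsUnique_path y x
      exact (huniq _ h1).trans (huniq _ h2).symm
    have hsplit : (p.takeUntil y hy).append (p.dropUntil y hy) = p := p.take_spec hy
    have hedges : p.edges = (p.takeUntil y hy).edges ++ [s(y, x)] := by
      conv_lhs => rw [← hsplit]
      rw [Walk.edges_append, hdrop]
      rfl
    have hyx : s(y, x) = s(x, y) := Sym2.eq_swap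
    constructor
    · rw [htake, ← hyx, hedges, List.concat_eq_append]
    · have hnd : p.edges.Nodup := hpath.edges_nodup
      rw [hedges] at hnd
      have := (List.nodup_append'.mp hnd).2.2
      intro hmem
      rw [htake] at hmem
      exact this (a := s(y,x)) (by rwa [hyx]) (by simp)
  · left
    have hconcat : (p.concat h).IsPath := by
      apply Walk.IsPath.mk'
      rw [Walk.support_concat]
      rw [List.nodup_append']
      exact ⟨hpath.support_nodup, List.nodup_singleton y,
        fun a ha hb => by simp at hb; subst hb; exact hy ha⟩
    have : treePath hG s y = p.concat h := treePath_eq hG hconcat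
    constructor
    · rw [this, Walk.edges_concat]
    · intro hmem
      exact hy (p.snd_mem_support_of_mem_edges hmem)

lemma mem_edges_step {x y : α} (h : G.Adj x y) {e : Sym2 α} (hne : e ≠ s(x, y)) :
    e ∈ (treePath hG s x).edges ↔ e ∈ (treePath hG s y).edges := by
  rcases adj_step hG s h with ⟨h1, _⟩ | ⟨h1, _⟩ <;>
    rw [h1] <;> simp [List.concat_eq_append, hne]

lemma edge_step {x y : α} (h : G.Adj x y) :
    s(x, y) ∈ (treePath hG s x).edges ↔ s(x, y) ∉ (treePath hG s y).edges := by
  rcases adj_step hG s h with ⟨h1, h2⟩ | ⟨h1, h2⟩ <;>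
    rw [h1] <;> simp [List.concat_eq_append, h2]

/-- Separation: an edge lies on the path from `u` to `v` iff it lies on exactly one of
the paths from the root `s` to `u` and from `s` to `v`. -/
lemma mem_edges_treePath_iff (u v : α) (e : Sym2 α) :
    e ∈ (treePath hG u v).edges ↔
      ¬(e ∈ (treePath hG s u).edges ↔ e ∈ (treePath hG s v).edges) := by
  suffices H : ∀ (u v : α) (p : G.Walk u v), p.IsPath → ∀ e : Sym2 α,
      (e ∈ p.edges ↔ ¬(e ∈ (treePath hG s u).edges ↔ e ∈ (treePath hG s v).edges)) by
    exact H u v _ (treePath_isPath hG u v) e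
  intro u v p
  induction p with
  | nil => intro hp e; simp
  | @cons u x v h q ih =>
    intro hp e
    have hq : q.IsPath := hp.of_cons
    have hnd : s(u, x) ∉ q.edges := by
      have := hp.edges_nodup
      rw [Walk.edges_cons] at this
      exact (List.nodup_cons.mp this).1
    have IH := ih hq e
    rw [Walk.edges_cons, List.mem_cons]
    by_cases he : e = s(u, x)
    · subst he
      have h1 := edge_step hG s h
      tauto
    · have h1 := mem_edges_step hG s h he
      simp only [he, false_or]
      tauto
/-! ### Prefix characterization and lex-interval lemma -/

lemma prefix_char {e : Sym2 α} {b : α} (hbe : b ∈ e) (hb : e ∈ (treePath hG s b).edges)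
    (v : α) :
    e ∈ (treePath hG s v).edges ↔
      (treePath hG s b).support <+: (treePath hG s v).support := by
  constructor
  · intro hev
    have hbsup : b ∈ (treePath hG s v).support := by
      induction e using Sym2.ind with
      | _ x y =>
        rcases Sym2.mem_iff.mp hbe with rfl | rfl
        · exact (treePath hG s v).fst_mem_support_of_mem_edges hev
        · exact (treePath hG s v).snd_mem_support_of_mem_edges hev
    have heq : treePath hG s b = (treePath hG s v).takeUntil b hbsup :=
      treePath_eq hG ((treePath_isPath hG s v).takeUntil hbsup)
    refine ⟨((treePath hG s v).dropUntil b hbsup).support.tail, ?_⟩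
    rw [heq, ← Walk.support_append, Walk.take_spec]
  · intro hpre
    have hbsup : b ∈ (treePath hG s v).support :=
      hpre.subset ((treePath hG s b).end_mem_support)
    have heq : treePath hG s b = (treePath hG s v).takeUntil b hbsup :=
      treePath_eq hG ((treePath_isPath hG s v).takeUntil hbsup)
    rw [heq] at hb
    have hsplit := Walk.take_spec (treePath hG s v) hbsup
    rw [← hsplit, Walk.edges_append]
    exact List.mem_append_left _ hb

lemma exists_prefix_char {e : Sym2 α} (he : e ∈ G.edgeSet) :
    ∃ b : α, b ≠ s ∧ e ∈ (treePath hG s b).edges ∧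
      ∀ v : α, (e ∈ (treePath hG s v).edges ↔
        (treePath hG s b).support <+: (treePath hG s v).support) := by
  induction e using Sym2.ind with
  | _ x y =>
    have h : G.Adj x y := (SimpleGraph.mem_edgeSet G).mp he
    have hstep := edge_step hG s h
    by_cases hx : s(x, y) ∈ (treePath hG s x).edges
    · refine ⟨x, ?_, hx, prefix_char hG s (by simp) hx⟩
      intro rfl'; subst rfl'
      rw [edges_treePath_self] at hx; simp at hx
    · have hy : s(x, y) ∈ (treePath hG s y).edges := by tauto
      refine ⟨y, ?_, hy, prefix_char hG s (by simp) hy⟩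
      intro rfl'; subst rfl'
      rw [edges_treePath_self] at hy; simp at hy

lemma prefix_interval {β : Type*} [LinearOrder β] :
    ∀ (p : List β) {x y z : List β}, p <+: x → p <+: z → x ≤ y → y ≤ z → p <+: y := by
  intro p
  induction p with
  | nil => intro x y z _ _ _ _; exact List.nil_prefix
  | cons a p' ih =>
    intro x y z hx hz hxy hyz
    rcases eq_or_lt_of_le hxy with rfl | hxy'
    · exact hx
    rcases eq_or_lt_of_le hyz with rfl | hyz'
    · exact hz
    obtain ⟨x1, hx1, hx'⟩ : ∃ t, x = a :: t ∧ p' <+: t := by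
      cases x with
      | nil => simpa using hx.length_le
      | cons b t =>
        obtain ⟨hab, hpt⟩ := List.cons_prefix_cons.mp hx
        exact ⟨t, by rw [hab], hpt⟩
    obtain ⟨z1, hz1, hz'⟩ : ∃ t, z = a :: t ∧ p' <+: t := by
      cases z with
      | nil => simpa using hz.length_le
      | cons b t =>
        obtain ⟨hab, hpt⟩ := List.cons_prefix_cons.mp hz
        exact ⟨t, by rw [hab], hpt⟩
    subst hx1; subst hz1
    cases y with
    | nil =>
      exfalso
      have : List.Lex (· < ·) (a :: x1) [] := hxy'
      cases this
    | cons b y1 =>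
      have hxy2 : List.Lex (· < ·) (a :: x1) (b :: y1) := hxy'
      have hyz2 : List.Lex (· < ·) (b :: y1) (a :: z1) := hyz'
      cases hxy2 with
      | rel h1 =>
        cases hyz2 with
        | rel h2 => exact absurd (h1.trans h2) (lt_irrefl a)
        | cons h2 => exact absurd h1 (lt_irrefl a)
      | cons h1 =>
        cases hyz2 with
        | rel h2 => exact absurd h2 (lt_irrefl a)
        | cons h2 =>
          have hy' : p' <+: y1 :=
            ih hx' hz' (le_of_lt (show x1 < y1 from h1)) (le_of_lt (show y1 < z1 from h2))
          exact List.cons_prefix_cons.mpr ⟨rfl, hy'⟩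
/-! ### Expansion of route length as a sum over edges -/

variable [Fintype α] [DecidableRel G.Adj]

lemma treeDist_eq_sum (w : Sym2 α → ℝ) (u v : α) :
    treeDist hG w u v = ∑ e ∈ G.edgeFinset, if e ∈ (treePath hG u v).edges then w e else 0 := by
  classical
  have hnd : (treePath hG u v).edges.Nodup := (treePath_isPath hG u v).edges_nodup
  have hfi : G.edgeFinset.filter (fun e => e ∈ (treePath hG u v).edges)
      = (treePath hG u v).edges.toFinset := by
    ext e
    simp only [Finset.mem_filter, List.mem_toFinset, SimpleGraph.mem_edgeFinset]
    exact ⟨fun h => h.2, fun h => ⟨(treePath hG u v).edges_subset_edgeSet h, h⟩⟩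
  rw [treeDist, ← Finset.sum_filter, hfi, List.sum_toFinset _ hnd]

/-- Chained distance along a list of vertices. -/
def dchain {X : Type*} (d : X → X → ℝ) : X → List X → ℝ
  | _, [] => 0
  | x, y :: ys => d x y + dchain d y ys

omit [DecidableEq α] [Fintype α] [DecidableRel G.Adj] in
lemma routeLen_eq_dchain {X : Type*} (d : X → X → ℝ) (s : X) (l : List X) :
    routeLen d s l = dchain d s (l ++ [s]) := by
  suffices H : ∀ (l : List X) (a b : X),
      (List.zip (a :: l) (l ++ [b])).foldr (fun p acc => d p.1 p.2 + acc) 0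
        = dchain d a (l ++ [b]) by
    exact H l s s
  intro l
  induction l with
  | nil => intro a b; simp [dchain]
  | cons v l' ih =>
    intro a b
    simp only [List.cons_append, List.zip_cons_cons, List.foldr_cons, dchain]
    rw [ih v b]

/-- The (decidable, boolean) predicate: edge `e` lies below vertex `v` (on path `s → v`). -/
noncomputable def fb (e : Sym2 α) (v : α) : Bool := decide (e ∈ (treePath hG s v).edges)

omit [Fintype α] [DecidableRel G.Adj] in
lemma fb_s (e : Sym2 α) : fb hG s e s = false := by
  simp [fb, edges_treePath_self]

omit [Fintype α] [DecidableRel G.Adj] in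
lemma fb_eq_true {e : Sym2 α} {v : α} :
    fb hG s e v = true ↔ e ∈ (treePath hG s v).edges := by
  simp [fb]

lemma dchain_eq_sum (w : Sym2 α → ℝ) :
    ∀ (L : List α) (a : α),
      dchain (treeDist hG w) a L
        = ∑ e ∈ G.edgeFinset, w e * (chg (fb hG s e a) (L.map (fb hG s e)) : ℝ) := by
  intro L
  induction L with
  | nil => intro a; simp [dchain, chg]
  | cons y L' ih =>
    intro a
    have hd : treeDist hG w a y
        = ∑ e ∈ G.edgeFinset, w e * (if fb hG s e a = fb hG s e y then (0 : ℝ) else 1) := by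
      rw [treeDist_eq_sum hG w a y]
      refine Finset.sum_congr rfl fun e _ => ?_
      have hsep := mem_edges_treePath_iff hG s a y e
      by_cases hc : fb hG s e a = fb hG s e y
      · have : ¬ e ∈ (treePath hG a y).edges := by
          rw [hsep]
          intro hne
          apply hne
          rw [← fb_eq_true hG s, ← fb_eq_true hG s, hc]
        simp [this, hc]
      · have : e ∈ (treePath hG a y).edges := by
          rw [hsep]
          intro hiff
          apply hc
          by_cases hA : e ∈ (treePath hG s a).edges
          · rw [(fb_eq_true hG s).mpr hA, (fb_eq_true hG s).mpr (hiff.mp hA)]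
          · have hB : ¬ e ∈ (treePath hG s y).edges := fun h => hA (hiff.mpr h)
            have h1 : fb hG s e a = false := by simpa [fb] using hA
            have h2 : fb hG s e y = false := by simpa [fb] using hB
            rw [h1, h2]
        simp [this, hc]
    show treeDist hG w a y + dchain (treeDist hG w) y L' = _
    rw [hd, ih y, ← Finset.sum_add_distrib]
    refine Finset.sum_congr rfl fun e _ => ?_
    show w e * _ + w e * _ = w e * (chg (fb hG s e a) (fb hG s e y :: L'.map (fb hG s e)) : ℝ)
    rw [show chg (fb hG s e a) (fb hG s e y :: L'.map (fb hG s e))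
        = (if fb hG s e a = fb hG s e y then 0 else 1) + chg (fb hG s e y) (L'.map (fb hG s e))
        from rfl]
    push_cast
    by_cases hc : fb hG s e a = fb hG s e y <;> simp [hc] <;> ring

lemma routeLen_eq_sum (w : Sym2 α → ℝ) (l : List α) :
    routeLen (treeDist hG w) s l
      = ∑ e ∈ G.edgeFinset, w e * (chg false ((l.map (fb hG s e)) ++ [false]) : ℝ) := by
  rw [routeLen_eq_dchain, dchain_eq_sum hG s w]
  refine Finset.sum_congr rfl fun e _ => ?_
  rw [fb_s, List.map_append]
  simp [fb_s]
/-! ### The tour cost equals twice the weight of the spanned subtree -/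

/-- Total weight of the edges spanned by `S`: edges lying on some path from the depot
`s` to a vertex of `S`. -/
noncomputable def WT (w : Sym2 α → ℝ) (S : Finset α) : ℝ :=
  ∑ e ∈ G.edgeFinset.filter (fun e => ∃ v ∈ S, e ∈ (treePath hG s v).edges), w e

lemma two_WT_eq (w : Sym2 α → ℝ) (S : Finset α) :
    2 * WT hG s w S
      = ∑ e ∈ G.edgeFinset,
          (if ∃ v ∈ S, e ∈ (treePath hG s v).edges then 2 * w e else 0) := by
  rw [WT, Finset.mul_sum, ← Finset.sum_filter]

lemma routeLen_ge (w : Sym2 α → ℝ) (hw : ∀ e ∈ G.edgeSet, 0 ≤ w e) (S : Finset α)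
    (l : List α) (hl : l.toFinset = S) :
    2 * WT hG s w S ≤ routeLen (treeDist hG w) s l := by
  rw [routeLen_eq_sum hG s w l, two_WT_eq]
  apply Finset.sum_le_sum
  intro e he
  have hwe : 0 ≤ w e := hw e (SimpleGraph.mem_edgeFinset.mp he)
  by_cases hp : ∃ v ∈ S, e ∈ (treePath hG s v).edges
  · rw [if_pos hp]
    obtain ⟨v, hv, hev⟩ := hp
    have hvl : v ∈ l := by rw [← hl] at hv; exact List.mem_toFinset.mp hv
    have htrue : true ∈ l.map (fb hG s e) :=
      List.mem_map.mpr ⟨v, hvl, (fb_eq_true hG s).mpr hev⟩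
    have h2 : (2 : ℝ) ≤ (chg false (l.map (fb hG s e) ++ [false]) : ℝ) := by
      exact_mod_cast two_le_chg htrue
    nlinarith
  · rw [if_neg hp]
    exact mul_nonneg hwe (Nat.cast_nonneg _)

lemma exists_routeLen_le (w : Sym2 α → ℝ) (hw : ∀ e ∈ G.edgeSet, 0 ≤ w e) (S : Finset α) :
    ∃ l : List α, l.Nodup ∧ l.toFinset = S ∧
      routeLen (treeDist hG w) s l ≤ 2 * WT hG s w S := by
  letI : LinearOrder α := LinearOrder.lift' (fun a => (Fintype.equivFin α) a)
    (Fintype.equivFin α).injective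
  set key : α → List α := fun v => (treePath hG s v).support with hkey
  let r : α → α → Prop := fun u v' => key u ≤ key v'
  haveI : DecidableRel r := fun a b => inferInstanceAs (Decidable (key a ≤ key b))
  haveI : IsTotal α r := ⟨fun a b => le_total (key a) (key b)⟩
  haveI : IsTrans α r := ⟨fun a b c h1 h2 => le_trans h1 h2⟩
  haveI : Std.Total r := ⟨fun a b => le_total (key a) (key b)⟩
  set l := List.insertionSort r S.toList with hldef
  have hperm : l.Perm S.toList := List.perm_insertionSort r S.toList
  have hnodup : l.Nodup := hperm.nodup_iff.mpr S.nodup_toList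
  have htf : l.toFinset = S := by
    ext a
    rw [List.mem_toFinset, hperm.mem_iff, Finset.mem_toList]
  refine ⟨l, hnodup, htf, ?_⟩
  rw [routeLen_eq_sum hG s w l, two_WT_eq]
  apply Finset.sum_le_sum
  intro e he
  have hwe : 0 ≤ w e := hw e (SimpleGraph.mem_edgeFinset.mp he)
  by_cases hp : ∃ v ∈ S, e ∈ (treePath hG s v).edges
  · rw [if_pos hp]
    obtain ⟨b, _hbs, _hbe, hchar⟩ :=
      exists_prefix_char hG s (SimpleGraph.mem_edgeFinset.mp he)
    have hsorted : l.Pairwise r := List.pairwise_insertionSort r S.toList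
    have hchg : chg false (l.map (fb hG s e) ++ [false]) ≤ 2 := by
      apply chg_le_two r (fb hG s e) l hsorted
      intro a b' c hab hbc hPa hPc
      rw [fb_eq_true hG s] at hPa hPc ⊢
      rw [hchar] at hPa hPc ⊢
      exact prefix_interval _ hPa hPc hab hbc
    have h2 : (chg false (l.map (fb hG s e) ++ [false]) : ℝ) ≤ 2 := by exact_mod_cast hchg
    nlinarith
  · rw [if_neg hp]
    have hzero : chg false (l.map (fb hG s e) ++ [false]) = 0 := by
      apply chg_eq_zero
      intro x hx
      rcases List.mem_append.mp hx with hx | hx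
      · obtain ⟨v, hvl, rfl⟩ := List.mem_map.mp hx
        by_contra hne
        have hvtrue : fb hG s e v = true := by
          cases hfb : fb hG s e v
          · exact absurd hfb hne
          · rfl
        exact hp ⟨v, htf ▸ List.mem_toFinset.mpr hvl, (fb_eq_true hG s).mp hvtrue⟩
      · simpa using hx
    rw [hzero]
    simp

lemma tourCost_eq_WT (w : Sym2 α → ℝ) (hw : ∀ e ∈ G.edgeSet, 0 ≤ w e) (S : Finset α) :
    tourCost (treeDist hG w) s S = 2 * WT hG s w S := by
  by_cases hS : S = ∅
  · subst hS
    rw [tourCost, if_pos rfl, WT]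
    rw [Finset.filter_false_of_mem (fun e _ => by simp)]
    simp
  · rw [tourCost, if_neg hS]
    have hlow : ∀ x ∈ {x : ℝ | ∃ l : List α, l.Nodup ∧ l.toFinset = S
        ∧ x = routeLen (treeDist hG w) s l}, 2 * WT hG s w S ≤ x := by
      rintro x ⟨l, _hnd, htf, rfl⟩
      exact routeLen_ge hG s w hw S l htf
    have hbdd : BddBelow {x : ℝ | ∃ l : List α, l.Nodup ∧ l.toFinset = S
        ∧ x = routeLen (treeDist hG w) s l} := ⟨2 * WT hG s w S, hlow⟩
    obtain ⟨l, hnd, htf, hle⟩ := exists_routeLen_le hG s w hw S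
    apply le_antisymm
    · exact (csInf_le hbdd ⟨l, hnd, htf, rfl⟩).trans hle
    · exact le_csInf ⟨_, ⟨l, hnd, htf, rfl⟩⟩ hlow
/-! ### Counting visit days for periodic feasible schedules -/

lemma windows_count {J : ℕ → Finset α} {j : α} {q : ℕ} (hq : 1 ≤ q)
    (hvis : ∀ t : ℕ, ∃ k : ℕ, t < k ∧ k ≤ t + q ∧ j ∈ J k) (M : ℕ) :
    M / q ≤ ((Finset.Ioc 0 M).filter (fun k => j ∈ J k)).card := by
  classical
  choose g hg1 hg2 hg3 using hvis
  have hgub : ∀ i : ℕ, 1 ≤ i → g ((i - 1) * q) ≤ i * q := by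
    intro i hi
    have h2 := hg2 ((i - 1) * q)
    have : (i - 1) * q + q = i * q := by
      rw [← Nat.sub_add_cancel hi, Nat.add_mul, Nat.one_mul, Nat.sub_add_cancel hi]
    omega
  have hmono : ∀ i i' : ℕ, 1 ≤ i → i < i' → g ((i - 1) * q) < g ((i' - 1) * q) := by
    intro i i' hi hii
    have h1 : g ((i - 1) * q) ≤ i * q := hgub i hi
    have h2 : (i' - 1) * q < g ((i' - 1) * q) := hg1 _
    have h3 : i * q ≤ (i' - 1) * q := Nat.mul_le_mul_right q (by omega)
    omega
  have hmaps : ∀ i ∈ Finset.Ioc 0 (M / q),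
      g ((i - 1) * q) ∈ (Finset.Ioc 0 M).filter (fun k => j ∈ J k) := by
    intro i hi
    rw [Finset.mem_Ioc] at hi
    rw [Finset.mem_filter, Finset.mem_Ioc]
    refine ⟨⟨?_, ?_⟩, hg3 _⟩
    · have := hg1 ((i - 1) * q); omega
    · have h1 := hgub i hi.1
      have h2 : i * q ≤ (M / q) * q := Nat.mul_le_mul_right q hi.2
      have h3 : (M / q) * q ≤ M := Nat.div_mul_le_self M q
      omega
  have hinj : Set.InjOn (fun i => g ((i - 1) * q)) ↑(Finset.Ioc 0 (M / q)) := by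
    intro i hi i' hi' heq
    simp only [Finset.coe_Ioc, Set.mem_Ioc] at hi hi'
    by_contra hne
    rcases Nat.lt_or_ge i i' with h | h
    · exact absurd heq (Nat.ne_of_lt (hmono i i' hi.1 h))
    · have h' : i' < i := by omega
      exact absurd heq.symm (Nat.ne_of_lt (hmono i' i hi'.1 h'))
  have := Finset.card_le_card_of_injOn _ hmaps hinj
  simpa [Nat.card_Ioc] using this

lemma periodic_iter {J : ℕ → Finset α} {ℓ : ℕ} (hper : ∀ k, J (k + ℓ) = J k) :
    ∀ m k, J (k + m * ℓ) = J k := by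
  intro m
  induction m with
  | zero => simp
  | succ n ih =>
    intro k
    have h : k + (n + 1) * ℓ = (k + n * ℓ) + ℓ := by ring
    rw [h, hper, ih]

lemma periodic_count {J : ℕ → Finset α} {ℓ : ℕ} (hper : ∀ k, J (k + ℓ) = J k) (j : α) :
    ∀ m : ℕ, ((Finset.Ioc 0 (m * ℓ)).filter (fun k => j ∈ J k)).card
      = m * ((Finset.Ioc 0 ℓ).filter (fun k => j ∈ J k)).card := by
  classical
  intro m
  induction m with
  | zero => simp
  | succ n ih =>
    have hsplit : Finset.Ioc 0 ((n + 1) * ℓ)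
        = Finset.Ioc 0 (n * ℓ) ∪ Finset.Ioc (n * ℓ) (n * ℓ + ℓ) := by
      rw [Finset.Ioc_union_Ioc_eq_Ioc (Nat.zero_le _) (Nat.le_add_right _ _)]
      congr 1
      ring
    have hdisj : Disjoint ((Finset.Ioc 0 (n * ℓ)).filter (fun k => j ∈ J k))
        ((Finset.Ioc (n * ℓ) (n * ℓ + ℓ)).filter (fun k => j ∈ J k)) := by
      rw [Finset.disjoint_left]
      intro k h1 h2
      rw [Finset.mem_filter, Finset.mem_Ioc] at h1 h2
      omega
    have himg : (Finset.Ioc (n * ℓ) (n * ℓ + ℓ)).filter (fun k => j ∈ J k)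
        = ((Finset.Ioc 0 ℓ).filter (fun k => j ∈ J k)).image (fun k => k + n * ℓ) := by
      ext k
      simp only [Finset.mem_filter, Finset.mem_Ioc, Finset.mem_image]
      constructor
      · rintro ⟨⟨h1, h2⟩, h3⟩
        refine ⟨k - n * ℓ, ⟨⟨by omega, by omega⟩, ?_⟩, by omega⟩
        have hk : (k - n * ℓ) + n * ℓ = k := by omega
        have := periodic_iter hper n (k - n * ℓ)
        rw [hk] at this
        rwa [this] at h3
      · rintro ⟨k', ⟨⟨h1, h2⟩, h3⟩, rfl⟩
        exact ⟨⟨by omega, by omega⟩, by rw [periodic_iter hper n k']; exact h3⟩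
    rw [hsplit, Finset.filter_union, Finset.card_union_of_disjoint hdisj, ih, himg,
      Finset.card_image_of_injective _ (add_left_injective _)]
    ring

lemma ell_le_mul {J : ℕ → Finset α} {ℓ q : ℕ} {j : α} (hq : 1 ≤ q)
    (hper : ∀ k, J (k + ℓ) = J k)
    (hvis : ∀ t : ℕ, ∃ k : ℕ, t < k ∧ k ≤ t + q ∧ j ∈ J k) :
    ℓ ≤ q * ((Finset.Ioc 0 ℓ).filter (fun k => j ∈ J k)).card := by
  have h1 := windows_count hq hvis (q * ℓ)
  rw [Nat.mul_div_cancel_left ℓ (by omega : 0 < q)] at h1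
  have h2 := periodic_count hper j q
  omega
/-! ### tt-weights -/

lemma ttWeight_spec (τ : α → ℕ) {e : Sym2 α} (he : e ∈ G.edgeSet) :
    ∃ j : α, j ≠ s ∧ e ∈ (treePath hG s j).edges ∧ ttWeight hG s τ e = τ j := by
  obtain ⟨b, hbs, hbe, _⟩ := exists_prefix_char hG s he
  have hmem : ttWeight hG s τ e ∈
      {m : ℕ | ∃ j : α, j ≠ s ∧ e ∈ (treePath hG s j).edges ∧ m = τ j} :=
    Nat.sInf_mem ⟨τ b, b, hbs, hbe, rfl⟩
  obtain ⟨j, hjs, hje, hjq⟩ := hmem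
  exact ⟨j, hjs, hje, hjq⟩

lemma ttWeight_le (τ : α → ℕ) {e : Sym2 α} {j : α} (hj : j ≠ s)
    (hje : e ∈ (treePath hG s j).edges) : ttWeight hG s τ e ≤ τ j :=
  Nat.sInf_le ⟨j, hj, hje, rfl⟩

lemma pow_two_dvd {a b : ℕ} (ha : ∃ i : ℕ, a = 2 ^ i) (hb : ∃ i : ℕ, b = 2 ^ i)
    (h : a ≤ b) : a ∣ b := by
  obtain ⟨i, rfl⟩ := ha
  obtain ⟨j, rfl⟩ := hb
  exact pow_dvd_pow 2 ((Nat.pow_le_pow_iff_right (by norm_num)).mp h)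

/-- With power-of-two turnover times, edge `e` is needed on day `k` iff `q(e) ∣ k`. -/
lemma covered_iff (τ : α → ℕ) (hτ : ∀ v : α, v ≠ s → 1 ≤ τ v)
    (hpow : ∀ v : α, v ≠ s → ∃ i : ℕ, τ v = 2 ^ i) {e : Sym2 α} (he : e ∈ G.edgeSet)
    (k : ℕ) :
    (∃ v ∈ Finset.univ.filter (fun j => j ≠ s ∧ τ j ∣ k), e ∈ (treePath hG s v).edges)
      ↔ ttWeight hG s τ e ∣ k := by
  obtain ⟨j, hjs, hje, hjq⟩ := ttWeight_spec hG s τ he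
  constructor
  · rintro ⟨v, hv, hev⟩
    rw [Finset.mem_filter] at hv
    obtain ⟨-, hvs, hvk⟩ := hv
    have h1 : ttWeight hG s τ e ≤ τ v := ttWeight_le hG s τ hvs hev
    have h2 : ttWeight hG s τ e ∣ τ v :=
      pow_two_dvd (hjq ▸ hpow j hjs) (hpow v hvs) h1
    exact h2.trans hvk
  · intro hdvd
    exact ⟨j, Finset.mem_filter.mpr ⟨Finset.mem_univ j, hjs, hjq ▸ hdvd⟩, hje⟩

lemma schedule_tourCost (w : Sym2 α → ℝ) (hw : ∀ e ∈ G.edgeSet, 0 ≤ w e) (τ : α → ℕ)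
    (hτ : ∀ v : α, v ≠ s → 1 ≤ τ v)
    (hpow : ∀ v : α, v ≠ s → ∃ i : ℕ, τ v = 2 ^ i) (k : ℕ) :
    tourCost (treeDist hG w) s (Finset.univ.filter (fun j => j ≠ s ∧ τ j ∣ k))
      = ∑ e ∈ G.edgeFinset, if ttWeight hG s τ e ∣ k then 2 * w e else 0 := by
  rw [tourCost_eq_WT hG s w hw, two_WT_eq]
  refine Finset.sum_congr rfl fun e he => ?_
  have := covered_iff hG s τ hτ hpow (SimpleGraph.mem_edgeFinset.mp he) k
  by_cases h : ttWeight hG s τ e ∣ k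
  · rw [if_pos h, if_pos (this.mpr h)]
  · rw [if_neg h, if_neg (fun hc => h (this.mp hc))]
lemma lcm_ne_zero (τ : α → ℕ) (hτ : ∀ v : α, v ≠ s → 1 ≤ τ v) :
    (Finset.univ.erase s).lcm τ ≠ 0 := by
  intro h
  rw [Finset.lcm_eq_zero_iff] at h
  obtain ⟨j, hj, hj0⟩ := h
  have hjs : j ≠ s := (Finset.mem_erase.mp hj).1
  have := hτ j hjs
  omega

lemma Icc_one_eq_Ioc (n : ℕ) : Finset.Icc 1 n = Finset.Ioc 0 n := by
  ext x
  simp only [Finset.mem_Icc, Finset.mem_Ioc]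
  omega

lemma avg_eq (w : Sym2 α → ℝ) (hw : ∀ e ∈ G.edgeSet, 0 ≤ w e) (τ : α → ℕ)
    (hτ : ∀ v : α, v ≠ s → 1 ≤ τ v)
    (hpow : ∀ v : α, v ≠ s → ∃ i : ℕ, τ v = 2 ^ i) :
    (∑ k ∈ Finset.Icc 1 ((Finset.univ.erase s).lcm τ),
        tourCost (treeDist hG w) s (Finset.univ.filter (fun j => j ≠ s ∧ τ j ∣ k))) /
      (((Finset.univ.erase s).lcm τ : ℕ) : ℝ)
      = 2 * ∑ e ∈ G.edgeFinset, w e / (ttWeight hG s τ e : ℝ) := by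
  classical
  set L := (Finset.univ.erase s).lcm τ with hLdef
  have hL0 : L ≠ 0 := lcm_ne_zero s τ hτ
  have hL0R : ((L : ℕ) : ℝ) ≠ 0 := Nat.cast_ne_zero.mpr hL0
  rw [Finset.sum_congr rfl fun k _ => schedule_tourCost hG s w hw τ hτ hpow k,
    Finset.sum_comm, Finset.sum_div, Finset.mul_sum]
  refine Finset.sum_congr rfl fun e he => ?_
  obtain ⟨j, hjs, hje, hjq⟩ := ttWeight_spec hG s τ (SimpleGraph.mem_edgeFinset.mp he)
  have hq1 : 1 ≤ ttWeight hG s τ e := hjq ▸ hτ j hjs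
  have hqdvd : ttWeight hG s τ e ∣ L := by
    rw [hjq, hLdef]
    exact Finset.dvd_lcm (Finset.mem_erase.mpr ⟨hjs, Finset.mem_univ j⟩)
  have hqR : ((ttWeight hG s τ e : ℕ) : ℝ) ≠ 0 := Nat.cast_ne_zero.mpr (by omega)
  have hcard : ∑ k ∈ Finset.Icc 1 L, (if ttWeight hG s τ e ∣ k then 2 * w e else 0)
      = ((L / ttWeight hG s τ e : ℕ) : ℝ) * (2 * w e) := by
    rw [← Finset.sum_filter, Finset.sum_const, nsmul_eq_mul, Icc_one_eq_Ioc,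
      Nat.Ioc_filter_dvd_card_eq_div]
  rw [hcard, Nat.cast_div hqdvd hqR]
  field_simp

lemma avg_ge (w : Sym2 α → ℝ) (hw : ∀ e ∈ G.edgeSet, 0 ≤ w e) (τ : α → ℕ)
    (hτ : ∀ v : α, v ≠ s → 1 ≤ τ v)
    (hpow : ∀ v : α, v ≠ s → ∃ i : ℕ, τ v = 2 ^ i)
    (J : ℕ → Finset α) (ℓ : ℕ) (hℓ : 1 ≤ ℓ)
    (hper : ∀ k, J (k + ℓ) = J k) (hfeas : FeasibleTree s τ J) :
    2 * ∑ e ∈ G.edgeFinset, w e / (ttWeight hG s τ e : ℝ)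
      ≤ (∑ k ∈ Finset.Icc 1 ℓ, tourCost (treeDist hG w) s (J k)) / (ℓ : ℝ) := by
  classical
  have hl0 : (0 : ℝ) < (ℓ : ℝ) := by exact_mod_cast hℓ
  rw [le_div_iff₀ hl0]
  rw [Finset.sum_congr rfl fun k (_ : k ∈ Finset.Icc 1 ℓ) => by
      rw [tourCost_eq_WT hG s w hw (J k), two_WT_eq]]
  rw [Finset.sum_comm, Finset.mul_sum, Finset.sum_mul]
  apply Finset.sum_le_sum
  intro e he
  rw [← Finset.sum_filter, Finset.sum_const, nsmul_eq_mul]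
  obtain ⟨j, hjs, hje, hjq⟩ := ttWeight_spec hG s τ (SimpleGraph.mem_edgeFinset.mp he)
  set q := ttWeight hG s τ e with hqdef
  have hq1 : 1 ≤ q := hjq ▸ hτ j hjs
  have hvis : ∀ t : ℕ, ∃ k : ℕ, t < k ∧ k ≤ t + q ∧ j ∈ J k := by
    intro t
    obtain ⟨k, h1, h2, h3⟩ := hfeas j hjs t
    exact ⟨k, h1, by rw [hjq]; exact h2, h3⟩
  have hcount : ℓ ≤ q * ((Finset.Ioc 0 ℓ).filter (fun k => j ∈ J k)).card :=
    ell_le_mul hq1 hper hvis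
  have hsub : ((Finset.Ioc 0 ℓ).filter (fun k => j ∈ J k)).card
      ≤ ((Finset.Icc 1 ℓ).filter
          (fun k => ∃ v ∈ J k, e ∈ (treePath hG s v).edges)).card := by
    rw [Icc_one_eq_Ioc]
    apply Finset.card_le_card
    intro k hk
    rw [Finset.mem_filter] at hk ⊢
    exact ⟨hk.1, j, hk.2, hje⟩
  set c := ((Finset.Icc 1 ℓ).filter
      (fun k => ∃ v ∈ J k, e ∈ (treePath hG s v).edges)).card with hcdef
  have h1 : (ℓ : ℝ) ≤ (q : ℝ) * (c : ℝ) := by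
    have : ℓ ≤ q * c := hcount.trans (Nat.mul_le_mul_left q hsub)
    exact_mod_cast this
  have hq0 : (0 : ℝ) < (q : ℝ) := by exact_mod_cast hq1
  have hw0 : 0 ≤ w e := hw e (SimpleGraph.mem_edgeFinset.mp he)
  have h2 : (ℓ : ℝ) / (q : ℝ) ≤ (c : ℝ) := (div_le_iff₀ hq0).mpr (by linarith)
  calc 2 * (w e / (q : ℝ)) * (ℓ : ℝ) = (2 * w e) * ((ℓ : ℝ) / (q : ℝ)) := by ring
    _ ≤ (2 * w e) * (c : ℝ) := by
        apply mul_le_mul_of_nonneg_left h2 (by linarith)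
    _ = (c : ℝ) * (2 * w e) := by ring

end RFTT

/-- For tree instances in which all turnover times are powers of 2, the min-avg value
equals `2 ∑_e c(e)/q(e)`, and this value is attained by the synchronized periodic
schedule `J k = { j : τ j ∣ k }` (with period the lcm of the turnover times). -/
theorem tree_minAvg_powers_of_two {α : Type*} [Fintype α] [DecidableEq α]
    {G : SimpleGraph α} [DecidableRel G.Adj] (hG : G.IsTree) (w : Sym2 α → ℝ)
    (hw : ∀ e ∈ G.edgeSet, 0 ≤ w e) (s : α) (τ : α → ℕ)
    (hτ : ∀ v : α, v ≠ s → 1 ≤ τ v)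
    (hpow : ∀ v : α, v ≠ s → ∃ i : ℕ, τ v = 2 ^ i) :
    minAvgTree hG w s τ = 2 * ∑ e ∈ G.edgeFinset, w e / (ttWeight hG s τ e : ℝ) ∧
    FeasibleTree s τ (fun k => Finset.univ.filter (fun j => j ≠ s ∧ τ j ∣ k)) ∧
    (∀ k : ℕ,
      Finset.univ.filter (fun j => j ≠ s ∧ τ j ∣ (k + (Finset.univ.erase s).lcm τ)) =
      Finset.univ.filter (fun j => j ≠ s ∧ τ j ∣ k)) ∧
    (∑ k ∈ Finset.Icc 1 ((Finset.univ.erase s).lcm τ),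
        tourCost (treeDist hG w) s (Finset.univ.filter (fun j => j ≠ s ∧ τ j ∣ k))) /
      (((Finset.univ.erase s).lcm τ : ℕ) : ℝ) =
      2 * ∑ e ∈ G.edgeFinset, w e / (ttWeight hG s τ e : ℝ) := by
  have hfeas : FeasibleTree s τ (fun k => Finset.univ.filter (fun j => j ≠ s ∧ τ j ∣ k)) := by
    intro v hv t
    have h0 : 0 < τ v := hτ v hv
    have hdm := Nat.div_add_mod t (τ v)
    have hmod := Nat.mod_lt t h0
    have hmul : τ v * (t / τ v + 1) = τ v * (t / τ v) + τ v := by ring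
    refine ⟨τ v * (t / τ v + 1), by omega, by omega, ?_⟩
    simp only [Finset.mem_filter]
    exact ⟨Finset.mem_univ v, hv, dvd_mul_right _ _⟩
  have hper : ∀ k : ℕ,
      Finset.univ.filter (fun j => j ≠ s ∧ τ j ∣ (k + (Finset.univ.erase s).lcm τ)) =
      Finset.univ.filter (fun j => j ≠ s ∧ τ j ∣ k) := by
    intro k
    apply Finset.filter_congr
    intro j _
    have hdvd : ∀ _ : j ≠ s, τ j ∣ (Finset.univ.erase s).lcm τ := fun hj =>
      Finset.dvd_lcm (Finset.mem_erase.mpr ⟨hj, Finset.mem_univ j⟩)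
    constructor
    · rintro ⟨hj, hd⟩
      refine ⟨hj, ?_⟩
      have h2 := Nat.dvd_sub hd (hdvd hj)
      simpa using h2
    · rintro ⟨hj, hd⟩
      exact ⟨hj, dvd_add hd (hdvd hj)⟩
  have havg := RFTT.avg_eq hG s w hw τ hτ hpow
  refine ⟨?_, hfeas, hper, havg⟩
  have hL0 : (Finset.univ.erase s).lcm τ ≠ 0 := RFTT.lcm_ne_zero s τ hτ
  set T := 2 * ∑ e ∈ G.edgeFinset, w e / (ttWeight hG s τ e : ℝ) with hT
  set A := {x : ℝ | ∃ (J : ℕ → Finset α) (ℓ : ℕ), 1 ≤ ℓ ∧ (∀ k : ℕ, J (k + ℓ) = J k) ∧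
    FeasibleTree s τ J ∧
    x = (∑ k ∈ Finset.Icc 1 ℓ, tourCost (treeDist hG w) s (J k)) / (ℓ : ℝ)} with hA
  have hmem : (∑ k ∈ Finset.Icc 1 ((Finset.univ.erase s).lcm τ),
      tourCost (treeDist hG w) s (Finset.univ.filter (fun j => j ≠ s ∧ τ j ∣ k))) /
      (((Finset.univ.erase s).lcm τ : ℕ) : ℝ) ∈ A :=
    ⟨fun k => Finset.univ.filter (fun j => j ≠ s ∧ τ j ∣ k),
      (Finset.univ.erase s).lcm τ, Nat.one_le_iff_ne_zero.mpr hL0,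
      fun k => hper k, hfeas, rfl⟩
  have hlb : ∀ x ∈ A, T ≤ x := by
    rintro x ⟨J, ℓ, hℓ, hperJ, hfeasJ, rfl⟩
    exact RFTT.avg_ge hG s w hw τ hτ hpow J ℓ hℓ hperJ hfeasJ
  rw [minAvgTree]
  apply le_antisymm
  · exact (csInf_le ⟨T, hlb⟩ hmem).trans_eq havg
  · exact le_csInf ⟨_, hmem⟩ hlb
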